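/- Let G = (V,E) be a locally finite graph, let μ be a mass distribution on G, let A ⊆ V, and let p > 0. Suppose v ∈ A with μ(v) > 0 and 0 < m ≤ μ(v), so that toppling mass m at v is a valid toppling move. Then N_p(G, A, T_v^m μ) ≤ N_p(G, A, μ); that is, performing a toppling move inside A cannot increase the minimum number of toppling moves needed to transport mass p outside of A. -/
import Mathlib


open scoped Classical ENNReal

noncomputable section

variable {V : Type*}

/-- A mass distribution: a nonnegative, finitely supported function on the vertices. -/
def IsMassDist (μ : V → ℝ) : Prop :=
  (∀ v, 0 ≤ μ v) ∧ (Function.support μ).Finite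

/-- The unit point mass at a vertex `o`. -/
def pointMass (o : V) : V → ℝ := fun u => if u = o then 1 else 0

/-- The result of toppling mass `m` at the vertex `v`: remove mass `m` from `v` and
distribute it equally among the neighbors of `v`. -/
def topple (G : SimpleGraph V) [G.LocallyFinite] (μ : V → ℝ) (v : V) (m : ℝ) : V → ℝ :=
  fun u => μ u - (if u = v then m else 0) + (if G.Adj v u then m / (G.degree v : ℝ) else 0)

/-- `ToppleSeq G μ₀ t μ₁` : there is a sequence of `t` valid toppling moves
taking `μ₀` to `μ₁`. -/
def ToppleSeq (G : SimpleGraph V) [G.LocallyFinite] (μ₀ : V → ℝ) (t : ℕ) (μ₁ : V → ℝ) : Prop :=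
  ∃ μs : ℕ → V → ℝ, μs 0 = μ₀ ∧ μs t = μ₁ ∧
    ∀ i < t, ∃ v m, 0 < m ∧ m ≤ μs i v ∧ μs (i + 1) = topple G (μs i) v m

/-- `CanTransport G A p μ₀ t` : starting from `μ₀` there are `t` toppling moves after which
the total mass outside of `A` is at least `p`. -/
def CanTransport (G : SimpleGraph V) [G.LocallyFinite] (A : Set V) (p : ℝ)
    (μ₀ : V → ℝ) (t : ℕ) : Prop :=
  ∃ μ₁ : V → ℝ, ToppleSeq G μ₀ t μ₁ ∧ p ≤ ∑' v : {v : V // v ∉ A}, μ₁ v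

/-- The open ball of radius `n` around `o` in the graph distance. -/
def gball (G : SimpleGraph V) (o : V) (n : ℕ) : Set V := {u | G.dist o u < n}


/-- `minTopples G A p μ₀` : the minimum number of toppling moves needed to transport mass `p`
outside of the set `A`, starting from the mass distribution `μ₀` (with value `⊤` if this is
impossible). -/
def minTopples (G : SimpleGraph V) [G.LocallyFinite] (A : Set V) (p : ℝ)
    (μ₀ : V → ℝ) : ℕ∞ :=
  sInf {n : ℕ∞ | ∃ t : ℕ, n = (t : ℕ∞) ∧ CanTransport G A p μ₀ t}

lemma topple_comm' (G : SimpleGraph V) [G.LocallyFinite] (μ : V → ℝ) (a b : V) (α β : ℝ) :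
    topple G (topple G μ a α) b β = topple G (topple G μ b β) a α := by
  funext u; unfold topple; ring

lemma topple_merge (G : SimpleGraph V) [G.LocallyFinite] (μ : V → ℝ) (a : V) (α β : ℝ) :
    topple G (topple G μ a α) a β = topple G μ a (α + β) := by
  funext u; unfold topple; split_ifs <;> ring_nf

lemma topple_apply_ne (G : SimpleGraph V) [G.LocallyFinite] (μ : V → ℝ) (a u : V) (α : ℝ)
    (hα : 0 ≤ α) (h : u ≠ a) : μ u ≤ topple G μ a α u := by
  unfold topple
  simp only [if_neg h]
  have : 0 ≤ (if G.Adj a u then α / (G.degree a : ℝ) else 0) := by positivity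
  linarith

lemma topple_apply_self (G : SimpleGraph V) [G.LocallyFinite] (μ : V → ℝ) (a : V) (α : ℝ) :
    topple G μ a α a = μ a - α := by
  unfold topple; simp [G.irrefl]

lemma isMassDist_topple (G : SimpleGraph V) [G.LocallyFinite] {μ : V → ℝ} (hμ : IsMassDist μ)
    {a : V} {α : ℝ} (h0 : 0 ≤ α) (h1 : α ≤ μ a) : IsMassDist (topple G μ a α) := by
  constructor
  · intro u
    by_cases hu : u = a
    · subst hu; rw [topple_apply_self]; linarith
    · exact le_trans (hμ.1 u) (topple_apply_ne G μ a u α h0 hu)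
  · apply Set.Finite.subset (hμ.2.union ((Set.finite_range
      (fun x : G.neighborSet a => (x : V))).insert a))
    intro u hu
    by_cases h : μ u = 0
    · right
      unfold topple Function.support at hu
      simp only [Set.mem_setOf_eq, h] at hu
      by_cases hua : u = a
      · exact Set.mem_insert_iff.mpr (Or.inl hua)
      · have hadj : G.Adj a u := by
          simp only [if_neg hua, zero_sub, if_neg hua] at hu
          by_contra hadj
          simp [hadj] at hu
        right
        exact ⟨⟨u, hadj⟩, rfl⟩
    · exact Or.inl h

lemma summable_outside {A : Set V} {μ : V → ℝ} (hμ : IsMassDist μ) :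
    Summable (fun v : {v : V // v ∉ A} => μ v) := by
  apply summable_of_finite_support
  have : Function.support (fun v : {v : V // v ∉ A} => μ v)
      ⊆ (Subtype.val) ⁻¹' (Function.support μ) := by
    intro x hx; exact hx
  exact Set.Finite.subset (Set.Finite.preimage (Subtype.val_injective.injOn) hμ.2) this

lemma canTransport_cons (G : SimpleGraph V) [G.LocallyFinite] {A : Set V} {p : ℝ}
    {ν : V → ℝ} {u : V} {m₁ : ℝ} {t : ℕ} (h0 : 0 < m₁) (h1 : m₁ ≤ ν u)
    (h : CanTransport G A p (topple G ν u m₁) t) : CanTransport G A p ν (t + 1) := by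
  obtain ⟨μ₁, ⟨μs, hs0, hst, hstep⟩, hp⟩ := h
  refine ⟨μ₁, ⟨fun i => match i with | 0 => ν | j+1 => μs j, rfl, hst, ?_⟩, hp⟩
  intro i hi
  match i with
  | 0 => exact ⟨u, m₁, h0, h1, by simpa using hs0⟩
  | j+1 =>
    obtain ⟨w, m', h'⟩ := hstep j (by omega)
    exact ⟨w, m', h'⟩

lemma canTransport_uncons (G : SimpleGraph V) [G.LocallyFinite] {A : Set V} {p : ℝ}
    {ν : V → ℝ} {t : ℕ} (h : CanTransport G A p ν (t + 1)) :
    ∃ u m₁, 0 < m₁ ∧ m₁ ≤ ν u ∧ CanTransport G A p (topple G ν u m₁) t := by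
  obtain ⟨μ₁, ⟨μs, hs0, hst, hstep⟩, hp⟩ := h
  obtain ⟨u, m₁, hm0, hm1, heq⟩ := hstep 0 (by omega)
  rw [hs0] at hm1 heq
  refine ⟨u, m₁, hm0, hm1, μ₁, ⟨fun i => μs (i+1), by simpa using heq, hst, ?_⟩, hp⟩
  intro i hi
  exact hstep (i+1) (by omega)

lemma key (G : SimpleGraph V) [G.LocallyFinite] (A : Set V) (p : ℝ) (v : V) (hv : v ∈ A) :
    ∀ t : ℕ, ∀ μ : V → ℝ, IsMassDist μ → ∀ m : ℝ, 0 < m → m ≤ μ v →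
      CanTransport G A p μ t → ∃ t' ≤ t, CanTransport G A p (topple G μ v m) t' := by
  intro t
  induction t with
  | zero =>
    intro μ hμ m hm0 hm h
    obtain ⟨μ₁, ⟨μs, hs0, hst, _⟩, hp⟩ := h
    have hμ₁ : μ₁ = μ := by rw [← hst, hs0]
    rw [hμ₁] at hp
    refine ⟨0, le_refl _, topple G μ v m, ⟨fun _ => topple G μ v m, rfl, rfl, fun i hi => absurd hi (Nat.not_lt_zero i)⟩, ?_⟩
    refine le_trans hp (Summable.tsum_le_tsum ?_ (summable_outside hμ)
      (summable_outside (isMassDist_topple G hμ hm0.le hm)))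
    intro x
    exact topple_apply_ne G μ v x m hm0.le (fun hx => x.2 (hx ▸ hv))
  | succ t ih =>
    intro μ hμ m hm0 hm h
    obtain ⟨u, m₁, h0, h1, h2⟩ := canTransport_uncons G h
    have hμ' : IsMassDist (topple G μ u m₁) := isMassDist_topple G hμ h0.le h1
    by_cases huv : u = v
    · subst huv
      rcases lt_trichotomy m m₁ with hc | hc | hc
      · -- m < m₁ : prepend toppling m₁ - m at u
        have hva : m₁ - m ≤ topple G μ u m u := by rw [topple_apply_self]; linarith
        have h2' : CanTransport G A p (topple G (topple G μ u m) u (m₁ - m)) t := by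
          rw [topple_merge, show m + (m₁ - m) = m₁ by ring]; exact h2
        exact ⟨t + 1, le_refl _, canTransport_cons G (by linarith) hva h2'⟩
      · subst hc; exact ⟨t, by omega, h2⟩
      · -- m₁ < m : apply ih with mass m - m₁ at v
        have hle : m - m₁ ≤ topple G μ u m₁ u := by
          rw [topple_apply_self]; linarith
        obtain ⟨t', ht', hct⟩ := ih (topple G μ u m₁) hμ' (m - m₁) (by linarith) hle h2
        rw [topple_merge, show m₁ + (m - m₁) = m by ring] at hct
        exact ⟨t', by omega, hct⟩
    · have hle : m ≤ topple G μ u m₁ v :=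
        le_trans hm (topple_apply_ne G μ u v m₁ h0.le (Ne.symm huv))
      obtain ⟨t', ht', hct⟩ := ih (topple G μ u m₁) hμ' m hm0 hle h2
      rw [topple_comm'] at hct
      refine ⟨t' + 1, by omega, canTransport_cons G h0 ?_ hct⟩
      exact le_trans h1 (topple_apply_ne G μ v u m hm0.le huv)

/-- **Smoothing weakly reduces the minimum number of toppling moves**
(Florescu–Peres–Rácz, Lemma 3.1). Let `μ` be a mass distribution on a locally finite graph `G`,
let `A ⊆ V` and `p > 0`. If `v ∈ A` and `0 < m ≤ μ(v)` (so that toppling mass `m` at `v` is a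
valid toppling move), then `N_p(G, A, T_v^m μ) ≤ N_p(G, A, μ)`. -/
theorem smoothing_le {V : Type*} (G : SimpleGraph V) [G.LocallyFinite]
    (μ : V → ℝ) (hμ : IsMassDist μ) (A : Set V) (p : ℝ) (hp : 0 < p)
    (v : V) (hv : v ∈ A) (m : ℝ) (hm0 : 0 < m) (hm : m ≤ μ v) :
    minTopples G A p (topple G μ v m) ≤ minTopples G A p μ := by
  apply le_sInf
  rintro n ⟨t, rfl, hct⟩
  obtain ⟨t', ht', hct'⟩ := key G A p v hv t μ hμ m hm0 hm hct
  calc minTopples G A p (topple G μ v m) ≤ (t' : ℕ∞) := sInf_le ⟨t', rfl, hct'⟩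
    _ ≤ (t : ℕ∞) := by exact_mod_cast ht'

end
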